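/- Let q ≥ 2 and N ≥ s ≥ 1 be integers, let δ > 0 be a real number, and let p ∈ Σ^N. If q^s ≥ N^{2+δ}, then |O_p| ≥ q^N · (1 − N^{−δ}). -/

import Mathlib

/-- The length-`s` window of the string `x` at location `i`. -/
def win {α : Type*} (x : List α) (i s : ℕ) : List α := (x.drop i).take s

/-- `x ⊥ₛ y`: no length-`s` window of `x` equals a length-`s` window of `y`. -/
def perp {α : Type*} (s : ℕ) (x y : List α) : Prop :=
  ∀ i j, i + s ≤ x.length → j + s ≤ y.length → win x i s ≠ win y j s

/-- `O_p`: the set of strings of length `N` over `ZMod q` all of whose length-`s` windows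
differ from every length-`s` window of `p`. -/
def Op (q N s : ℕ) (p : List (ZMod q)) : Set (List (ZMod q)) :=
  {c | c.length = N ∧ perp s c p}

/-- helper: cardinality of length-n strings -/
lemma ncard_len (q n : ℕ) (hq : 0 < q) :
    {l : List (ZMod q) | l.length = n}.ncard = q ^ n := by
  haveI : NeZero q := ⟨hq.ne'⟩
  have : Nat.card {l : List (ZMod q) | l.length = n} = q ^ n := by
    have e : {l : List (ZMod q) | l.length = n} ≃ List.Vector (ZMod q) n :=
      Equiv.refl _
    rw [Nat.card_congr e, Nat.card_eq_fintype_card, card_vector, ZMod.card]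
  rw [← Nat.card_coe_set_eq, this]

lemma finite_len (q n : ℕ) (hq : 0 < q) :
    {l : List (ZMod q) | l.length = n}.Finite := by
  haveI : NeZero q := ⟨hq.ne'⟩
  have e : {l : List (ZMod q) | l.length = n} ≃ List.Vector (ZMod q) n :=
    Equiv.refl _
  exact Set.finite_coe_iff.mp (Finite.of_equiv _ e.symm)

lemma reconstruct' {α : Type*} (c : List α) (i s : ℕ) (hi : i + s ≤ c.length) :
    c = (c.take i ++ c.drop (i+s)).take i ++ win c i s ++ (c.take i ++ c.drop (i+s)).drop i := by
  have h1 : (c.take i).length = i := by rw [List.length_take]; omega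
  rw [List.take_left' h1, List.drop_left' h1, win, List.append_assoc]
  conv_lhs => rw [← List.take_append_drop i c]
  congr 1
  rw [← List.drop_drop, List.take_append_drop]

lemma ncard_winset_le (q N s i : ℕ) (hq : 0 < q) (w : List (ZMod q))
    (hi : i + s ≤ N) :
    {c : List (ZMod q) | c.length = N ∧ win c i s = w}.ncard ≤ q ^ (N - s) := by
  have := Set.ncard_le_ncard_of_injOn (s := {c : List (ZMod q) | c.length = N ∧ win c i s = w})
    (t := {l : List (ZMod q) | l.length = N - s})
    (fun c => c.take i ++ c.drop (i+s))
    (by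
      rintro c ⟨hlen, -⟩
      simp only [Set.mem_setOf_eq, List.length_append, List.length_take, List.length_drop, hlen]
      omega)
    (by
      rintro a ⟨ha, hwa⟩ b ⟨hb, hwb⟩ hab
      have ra := reconstruct' a i s (by omega)
      have rb := reconstruct' b i s (by omega)
      have hab' : a.take i ++ a.drop (i+s) = b.take i ++ b.drop (i+s) := hab
      rw [ra, rb, hab', hwa, hwb])
    (finite_len q (N - s) hq)
  rwa [ncard_len q (N - s) hq] at this

lemma ncard_biUnion_le' {α ι : Type*} [DecidableEq ι] (t : Finset ι) (f : ι → Set α) :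
    (⋃ i ∈ t, f i).ncard ≤ ∑ i ∈ t, (f i).ncard := by
  induction t using Finset.induction with
  | empty => simp
  | insert _ _ h ih =>
    rw [Finset.sum_insert h, Finset.set_biUnion_insert]
    exact le_trans (Set.ncard_union_le _ _) (by omega)


/-- If `q^s ≥ N^{2+δ}` then `|O_p| ≥ q^N · (1 − N^{−δ})`. -/
theorem stmt7 (q N s : ℕ) (hq : 2 ≤ q) (hs : 1 ≤ s) (hsN : s ≤ N)
    (δ : ℝ) (hδ : 0 < δ) (p : List (ZMod q)) (hp : p.length = N)
    (h : (N : ℝ) ^ ((2 : ℝ) + δ) ≤ (q : ℝ) ^ s) :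
    (q : ℝ) ^ N * (1 - (N : ℝ) ^ (-δ)) ≤ ((Op q N s p).ncard : ℝ) := by

  have hq0 : 0 < q := by omega
  have hN1 : 1 ≤ N := le_trans hs hsN
  set B := {c : List (ZMod q) | c.length = N ∧ ¬ perp s c p} with hBdef
  -- split
  have hsplit : (Op q N s p).ncard + B.ncard = q ^ N := by
    rw [← ncard_len q N hq0, ← Set.ncard_union_eq ?disj ?f1 ?f2]
    case disj =>
      rw [Set.disjoint_left]
      rintro c ⟨-, hcp⟩ ⟨-, hcnp⟩; exact hcnp hcp
    case f1 =>
      exact Set.Finite.subset (finite_len q N hq0) (fun c hc => hc.1)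
    case f2 =>
      exact Set.Finite.subset (finite_len q N hq0) (fun c hc => hc.1)
    congr 1
    ext c
    constructor
    · rintro (⟨h1, -⟩ | ⟨h1, -⟩) <;> exact h1
    · intro hc
      by_cases hperp : perp s c p
      · exact Or.inl ⟨hc, hperp⟩
      · exact Or.inr ⟨hc, hperp⟩
  -- bound B
  have hBsub : B ⊆ ⋃ ij ∈ Finset.range (N - s + 1) ×ˢ Finset.range (N - s + 1),
      {c : List (ZMod q) | c.length = N ∧ win c ij.1 s = win p ij.2 s} := by
    rintro c ⟨hlen, hnp⟩
    simp only [perp, not_forall, not_not] at hnp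
    obtain ⟨i, j, h1, h2, heq⟩ := hnp
    rw [hlen] at h1; rw [hp] at h2
    refine Set.mem_iUnion₂.mpr ⟨(i, j), ?_, ⟨hlen, heq⟩⟩
    simp only [Finset.mem_product, Finset.mem_range]
    omega
  have hBcard : B.ncard ≤ (N - s + 1) ^ 2 * q ^ (N - s) := by
    refine le_trans (Set.ncard_le_ncard hBsub ?_) ?_
    · exact Set.Finite.subset (finite_len q N hq0)
        (by rintro c hc; simp only [Set.mem_iUnion] at hc; obtain ⟨ij, -, h1, -⟩ := hc; exact h1)
    refine le_trans (ncard_biUnion_le' _ _) ?_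
    have : ∀ ij ∈ Finset.range (N - s + 1) ×ˢ Finset.range (N - s + 1),
        {c : List (ZMod q) | c.length = N ∧ win c ij.1 s = win p ij.2 s}.ncard ≤ q ^ (N - s) := by
      rintro ⟨i, j⟩ hij
      simp only [Finset.mem_product, Finset.mem_range] at hij
      exact ncard_winset_le q N s i hq0 (win p j s) (by omega)
    refine le_trans (Finset.sum_le_sum this) ?_
    rw [Finset.sum_const, Finset.card_product, Finset.card_range, smul_eq_mul, sq]
  -- real arithmetic
  have hNpos : (0:ℝ) < N := by exact_mod_cast hN1
  have hqpos : (0:ℝ) < q := by exact_mod_cast hq0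
  have hsR : (s:ℝ) ≤ (N:ℝ) := by exact_mod_cast hsN
  have h1R : (1:ℝ) ≤ (s:ℝ) := by exact_mod_cast hs
  have e1 : (N:ℝ) ^ (2:ℕ) ≤ (q:ℝ) ^ s * (N:ℝ) ^ (-δ) := by
    have h2 : (N:ℝ) ^ ((2:ℝ)) ≤ (q:ℝ) ^ s * (N:ℝ) ^ (-δ) := by
      rw [show (2:ℝ) = (2+δ)+(-δ) by ring, Real.rpow_add hNpos]
      exact mul_le_mul_of_nonneg_right h (Real.rpow_nonneg hNpos.le _)
    rwa [show ((2:ℝ)) = ((2:ℕ):ℝ) by norm_num, Real.rpow_natCast] at h2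
  have epow : (q:ℝ) ^ (N-s) * (q:ℝ) ^ s = (q:ℝ) ^ N := by
    rw [← pow_add, Nat.sub_add_cancel hsN]
  have hmain : ((N:ℝ) - s + 1) ^ 2 * (q:ℝ) ^ (N - s) ≤ (q:ℝ) ^ N * (N:ℝ) ^ (-δ) := by
    calc ((N:ℝ) - s + 1) ^ 2 * (q:ℝ) ^ (N - s)
        ≤ (N:ℝ) ^ (2:ℕ) * (q:ℝ) ^ (N - s) := by
          gcongr
          · linarith
      _ ≤ ((q:ℝ) ^ s * (N:ℝ) ^ (-δ)) * (q:ℝ) ^ (N - s) :=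
          mul_le_mul_of_nonneg_right e1 (pow_nonneg hqpos.le _)
      _ = (q:ℝ) ^ N * (N:ℝ) ^ (-δ) := by rw [← epow]; ring
  have hBreal : (B.ncard : ℝ) ≤ ((N:ℝ) - s + 1) ^ 2 * (q:ℝ) ^ (N - s) := by
    calc (B.ncard : ℝ) ≤ ((N - s + 1 : ℕ) ^ 2 * q ^ (N - s) : ℕ) := by exact_mod_cast hBcard
    _ = ((N:ℝ) - s + 1) ^ 2 * (q:ℝ) ^ (N - s) := by push_cast [Nat.cast_sub hsN]; ring

  have hOp : ((Op q N s p).ncard : ℝ) = (q:ℝ) ^ N - B.ncard := by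
    have : ((Op q N s p).ncard + B.ncard : ℕ) = (q ^ N : ℕ) := hsplit
    have := congrArg (Nat.cast : ℕ → ℝ) this
    push_cast at this
    linarith
  rw [hOp]
  nlinarith [hmain, hBreal]
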